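/- Let m ≥ 2 and q ≥ 1 be integers. Then the quotient additive group ℤ[1/m] / (m^q − 1)·ℤ[1/m] is a cyclic group of order m^q − 1, i.e. it is isomorphic to ℤ/(m^q − 1)ℤ. -/

import Mathlib

noncomputable section

/-- `B a` is the additive subgroup of `ℝ` generated by the integer powers of `a`;
for an integer `m ≥ 2`, `B m` is `ℤ[1/m]` viewed inside `ℝ`. -/
def B (a : ℝ) : AddSubgroup ℝ := AddSubgroup.closure {x : ℝ | ∃ n : ℤ, x = a ^ n}

lemma B.zpow_mul_mem {a : ℝ} (ha : a ≠ 0) (m : ℤ) {x : ℝ} (hx : x ∈ B a) :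
    a ^ m * x ∈ B a := by
  have h : (B a).map (AddMonoidHom.mulLeft (a ^ m)) ≤ B a := by
    rw [B, AddMonoidHom.map_closure]
    refine (AddSubgroup.closure_le _).2 ?_
    rintro y ⟨x, ⟨n, rfl⟩, rfl⟩
    exact AddSubgroup.subset_closure ⟨m + n, (zpow_add₀ ha m n).symm⟩
  exact h (AddSubgroup.mem_map.2 ⟨x, hx, rfl⟩)

/-- Multiplication by `m^q − 1` as an additive endomorphism of `ℤ[1/m] = B m`;
its range is the subgroup `(m^q − 1)·ℤ[1/m]`. -/
def scaleHom (m q : ℕ) (hm : 2 ≤ m) : ↥(B (m : ℝ)) →+ ↥(B (m : ℝ)) where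
  toFun x := ⟨((m : ℝ) ^ q - 1) * x, by
    have hm0 : (m : ℝ) ≠ 0 := Nat.cast_ne_zero.mpr (by omega)
    have h1 : (m : ℝ) ^ (q : ℤ) * (x : ℝ) ∈ B (m : ℝ) := B.zpow_mul_mem hm0 q x.2
    have heq : ((m : ℝ) ^ q - 1) * (x : ℝ) = (m : ℝ) ^ (q : ℤ) * (x : ℝ) - (x : ℝ) := by
      rw [zpow_natCast]; ring
    rw [heq]
    exact sub_mem h1 x.2⟩
  map_zero' := Subtype.ext (by simp)
  map_add' x y := Subtype.ext (by simp [mul_add])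

lemma mem_B_iff {m : ℕ} (hm : 2 ≤ m) {x : ℝ} :
    x ∈ B (m : ℝ) ↔ ∃ j : ℤ, ∃ l : ℕ, x = (j : ℝ) / (m : ℝ) ^ l := by
  have hm0 : (m : ℝ) ≠ 0 := Nat.cast_ne_zero.mpr (by omega)
  constructor
  · intro hx
    induction hx using AddSubgroup.closure_induction with
    | mem y hy =>
      obtain ⟨n, rfl⟩ := hy
      rcases le_or_gt 0 n with h | h
      · refine ⟨(m : ℤ) ^ n.toNat, 0, ?_⟩
        push_cast
        rw [← zpow_natCast, Int.toNat_of_nonneg h]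
        simp
      · refine ⟨1, (-n).toNat, ?_⟩
        rw [← zpow_natCast, Int.toNat_of_nonneg (by omega : (0:ℤ) ≤ -n),
          zpow_neg]
        simp
    | zero => exact ⟨0, 0, by simp⟩
    | add a b _ _ ha hb =>
      obtain ⟨j, l, rfl⟩ := ha
      obtain ⟨j', l', rfl⟩ := hb
      refine ⟨j * m ^ l' + j' * m ^ l, l + l', ?_⟩
      rw [div_add_div _ _ (by positivity) (by positivity), pow_add]
      push_cast
      ring
    | neg a _ ha =>
      obtain ⟨j, l, rfl⟩ := ha
      exact ⟨-j, l, by push_cast; ring⟩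
  · rintro ⟨j, l, rfl⟩
    have h1 : (m : ℝ) ^ (-(l : ℤ)) ∈ B (m : ℝ) := AddSubgroup.subset_closure ⟨_, rfl⟩
    have := AddSubgroup.zsmul_mem _ h1 j
    convert this using 1
    rw [zpow_neg, zpow_natCast, zsmul_eq_mul]
    ring

/-- for integers `m ≥ 2`, `q ≥ 1`, the quotient group
`ℤ[1/m] / (m^q − 1)·ℤ[1/m]` is cyclic of order `m^q − 1`, i.e. isomorphic to
`ℤ/(m^q − 1)ℤ`. -/
theorem quotient_zinv_cyclic (m q : ℕ) (hm : 2 ≤ m) (hq : 1 ≤ q) :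
    Nonempty ((↥(B (m : ℝ)) ⧸ (scaleHom m q hm).range) ≃+ ZMod (m ^ q - 1)) := by
  have hm0 : (m : ℝ) ≠ 0 := Nat.cast_ne_zero.mpr (by omega)
  set N : ℕ := m ^ q - 1 with hN
  have hNq : 1 ≤ m ^ q := Nat.one_le_pow _ _ (by omega)
  have hNcast : ((N : ℤ) : ℝ) = (m : ℝ) ^ q - 1 := by
    rw [hN]; push_cast [hNq]; ring
  set R := (scaleHom m q hm).range
  -- the integer j viewed in B m
  have hjmem : ∀ j : ℤ, ((j : ℝ)) ∈ B (m : ℝ) := fun j =>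
    (mem_B_iff hm).2 ⟨j, 0, by simp⟩
  set e1 : ↥(B (m : ℝ)) := ⟨1, by simpa using hjmem 1⟩ with he1
  set f : ℤ →+ (↥(B (m : ℝ)) ⧸ R) :=
    (QuotientAddGroup.mk' R).comp ((zmultiplesHom _) e1) with hf
  have hfval : ∀ j : ℤ, f j = QuotientAddGroup.mk' R ⟨(j : ℝ), hjmem j⟩ := by
    intro j
    simp only [hf, AddMonoidHom.comp_apply, zmultiplesHom_apply]
    congr 1
    ext
    simp [he1]
  have hfN : f (N : ℤ) = 0 := by
    rw [hfval, QuotientAddGroup.mk'_apply, QuotientAddGroup.eq_zero_iff]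
    refine ⟨e1, ?_⟩
    ext
    simp only [scaleHom, AddMonoidHom.coe_mk, ZeroHom.coe_mk, he1]
    rw [hN]
    push_cast [hNq]
    ring
  set g : ZMod N →+ (↥(B (m : ℝ)) ⧸ R) := ZMod.lift N ⟨f, hfN⟩ with hg
  have hgf : ∀ j : ℤ, g ((j : ZMod N)) = f j := fun j => ZMod.lift_coe N ⟨f, hfN⟩ j
  -- key: mk (m^q * x) = mk x
  have key : ∀ (x : ℝ) (hx : x ∈ B (m : ℝ)),
      QuotientAddGroup.mk' R (⟨(m : ℝ) ^ q * x, by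
        simpa [zpow_natCast] using B.zpow_mul_mem hm0 (q : ℤ) hx⟩ : ↥(B (m : ℝ)))
      = QuotientAddGroup.mk' R ⟨x, hx⟩ := by
    intro x hx
    rw [QuotientAddGroup.mk'_eq_mk']
    refine ⟨-(scaleHom m q hm ⟨x, hx⟩), neg_mem (AddMonoidHom.mem_range.2 ⟨_, rfl⟩), ?_⟩
    ext
    simp [scaleHom]
    ring
  -- reduce any j / m^l to an integer in the quotient
  have core : ∀ (l : ℕ) (j : ℤ) (h : ((j : ℝ) / (m : ℝ) ^ l) ∈ B (m : ℝ)),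
      QuotientAddGroup.mk' R ⟨(j : ℝ) / (m : ℝ) ^ l, h⟩ = f (j * (m : ℤ) ^ ((q - 1) * l)) := by
    intro l
    induction l with
    | zero =>
      intro j h
      rw [hfval]
      congr 1
      ext
      simp
    | succ l ih =>
      intro j h
      have heq : (m : ℝ) ^ q * ((j : ℝ) / (m : ℝ) ^ (l + 1))
          = ((j * (m : ℤ) ^ (q - 1) : ℤ) : ℝ) / (m : ℝ) ^ l := by
        have : q = (q - 1) + 1 := by omega
        rw [this, pow_succ, pow_succ]
        push_cast
        field_simp
      have h2 : ((j * (m : ℤ) ^ (q - 1) : ℤ) : ℝ) / (m : ℝ) ^ l ∈ B (m : ℝ) :=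
        (mem_B_iff hm).2 ⟨_, l, rfl⟩
      have := key _ h
      rw [show (⟨(m : ℝ) ^ q * ((j : ℝ) / (m : ℝ) ^ (l + 1)), _⟩ : ↥(B (m : ℝ)))
          = ⟨_, h2⟩ from Subtype.ext heq] at this
      rw [← this, ih]
      congr 1
      rw [Nat.mul_succ (q - 1) l, pow_add]
      ring
  have hsurj : Function.Surjective g := by
    intro y
    obtain ⟨x, rfl⟩ := QuotientAddGroup.mk'_surjective R y
    obtain ⟨j, l, hx⟩ := (mem_B_iff hm).1 x.2
    have hx' : x = ⟨(j : ℝ) / (m : ℝ) ^ l, hx ▸ x.2⟩ := Subtype.ext hx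
    refine ⟨((j * (m : ℤ) ^ ((q - 1) * l) : ℤ) : ZMod N), ?_⟩
    rw [hgf, hx', core]
  have hNpos : 0 < N := by
    have : 2 ≤ m ^ q := le_trans hm (Nat.le_self_pow (by omega) m)
    omega
  haveI : NeZero N := ⟨by omega⟩
  have hcop : IsCoprime ((N : ℤ)) ((m : ℤ)) := by
    refine ⟨-1, (m : ℤ) ^ (q - 1), ?_⟩
    have h1 : (m : ℤ) ^ (q - 1) * m = (m : ℤ) ^ q := by
      rw [← pow_succ]; congr 1; omega
    have h2 : ((N : ℤ)) = (m : ℤ) ^ q - 1 := by rw [hN]; push_cast [hNq]; ring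
    rw [h1, h2]; ring
  have hker : ∀ j : ℤ, f j = 0 → (N : ℤ) ∣ j := by
    intro j hj
    rw [hfval, QuotientAddGroup.mk'_apply, QuotientAddGroup.eq_zero_iff] at hj
    obtain ⟨y, hy⟩ := hj
    obtain ⟨j', l, hyval⟩ := (mem_B_iff hm).1 y.2
    have hy' : ((m : ℝ) ^ q - 1) * ((y : ℝ)) = (j : ℝ) := congrArg Subtype.val hy
    rw [hyval] at hy'
    have hml : ((m : ℝ) ^ l) ≠ 0 := by positivity
    have hreal : ((m : ℝ) ^ q - 1) * (j' : ℝ) = (j : ℝ) * (m : ℝ) ^ l := by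
      calc ((m : ℝ) ^ q - 1) * (j' : ℝ)
          = (((m : ℝ) ^ q - 1) * ((j' : ℝ) / (m : ℝ) ^ l)) * (m : ℝ) ^ l := by
            field_simp
        _ = (j : ℝ) * (m : ℝ) ^ l := by rw [hy']
    rw [← hNcast] at hreal
    have hint : (N : ℤ) * j' = j * (m : ℤ) ^ l := by exact_mod_cast hreal
    exact (IsCoprime.pow_right (n := l) hcop).dvd_of_dvd_mul_right ⟨j', hint.symm⟩
  have hinj : Function.Injective g := by
    rw [injective_iff_map_eq_zero]
    intro z hz
    have hzval : z = ((z.val : ℤ) : ZMod N) :=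
      ((Int.cast_natCast _).trans (ZMod.natCast_rightInverse z)).symm
    rw [hzval, hgf] at hz
    have hdvd := hker _ hz
    rw [hzval]
    exact (ZMod.intCast_zmod_eq_zero_iff_dvd _ _).2 hdvd
  exact ⟨(AddEquiv.ofBijective g ⟨hinj, hsurj⟩).symm⟩
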